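/- For every κ > 0, a > 0 and ℓ₃, ℓ₄ > 0, the expression ρ(κ) := (κ²ℓ₄² + 1)(κ²ℓ₃² + 1) cosh(2κa) - (κ⁴ℓ₄²ℓ₃² - κ²(ℓ₄² - 4ℓ₄ℓ₃ + ℓ₃²) + 1) is strictly positive; in particular ρ(κ) > 2κ²(ℓ₄ - ℓ₃)². -/
import Mathlib

open Real

theorem rho_positive (κ a ℓ₃ ℓ₄ : ℝ) (hκ : 0 < κ) (ha : 0 < a)
    (h3 : 0 < ℓ₃) (h4 : 0 < ℓ₄) :
    2 * κ ^ 2 * (ℓ₄ - ℓ₃) ^ 2 <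
      (κ ^ 2 * ℓ₄ ^ 2 + 1) * (κ ^ 2 * ℓ₃ ^ 2 + 1) * Real.cosh (2 * κ * a)
        - (κ ^ 4 * ℓ₄ ^ 2 * ℓ₃ ^ 2 - κ ^ 2 * (ℓ₄ ^ 2 - 4 * ℓ₄ * ℓ₃ + ℓ₃ ^ 2) + 1)
    ∧ 0 <
      (κ ^ 2 * ℓ₄ ^ 2 + 1) * (κ ^ 2 * ℓ₃ ^ 2 + 1) * Real.cosh (2 * κ * a)
        - (κ ^ 4 * ℓ₄ ^ 2 * ℓ₃ ^ 2 - κ ^ 2 * (ℓ₄ ^ 2 - 4 * ℓ₄ * ℓ₃ + ℓ₃ ^ 2) + 1) := by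
  have hc : 1 < Real.cosh (2 * κ * a) := by
    rw [Real.one_lt_cosh]
    positivity
  have hP : 0 < (κ ^ 2 * ℓ₄ ^ 2 + 1) * (κ ^ 2 * ℓ₃ ^ 2 + 1) := by positivity
  constructor
  · nlinarith [sq_nonneg (ℓ₄ - ℓ₃), sq_nonneg κ, mul_pos hP (sub_pos.mpr hc)]
  · nlinarith [sq_nonneg (κ * (ℓ₄ - ℓ₃)), mul_pos hP (sub_pos.mpr hc)]
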